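/- arXiv:math/0408087 — 3 statements merged into one kernel-verified Lean document; each statement's English description precedes it below -/
import Mathlib

section
/- For every k, N ∈ ℕ, as r → 1⁻, |h(r·exp(2πik/2^N))| → ∞, where h(z) = ∑_{n=0}^∞ z^{2^n} on the unit disc. -/
open Filter

lemma summable_pow_two_pow {x : ℂ} (hx : ‖x‖ < 1) :
    Summable (fun n : ℕ => x ^ (2 ^ n)) := by
  have hx0 : 0 ≤ ‖x‖ := norm_nonneg x
  apply Summable.of_norm_bounded (summable_geometric_of_lt_one hx0 hx)
  intro n
  rw [norm_pow]
  exact pow_le_pow_of_le_one hx0 hx.le (Nat.lt_two_pow_self (n := n)).le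

lemma summable_pow_two_pow_real {x : ℝ} (h0 : 0 ≤ x) (hx : x < 1) :
    Summable (fun n : ℕ => x ^ (2 ^ n)) := by
  apply Summable.of_nonneg_of_le (fun n => pow_nonneg h0 _)
    (fun n => pow_le_pow_of_le_one h0 hx.le (Nat.lt_two_pow_self (n := n)).le)
    (summable_geometric_of_lt_one h0 hx)

lemma real_tail_tendsto (N : ℕ) :
    Tendsto (fun r : ℝ => ∑' n : ℕ, (r ^ 2 ^ N) ^ 2 ^ n)
      (nhdsWithin 1 (Set.Iio 1)) atTop := by
  rw [tendsto_atTop]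
  intro M
  obtain ⟨m, hm⟩ := exists_nat_gt (M + 1)
  have hcont : ContinuousAt (fun r : ℝ => ∑ n ∈ Finset.range m, (r ^ 2 ^ N) ^ 2 ^ n) 1 := by
    fun_prop
  have hval : (fun r : ℝ => ∑ n ∈ Finset.range m, (r ^ 2 ^ N) ^ 2 ^ n) 1 = m := by
    simp
  have hev : ∀ᶠ r in nhds (1 : ℝ),
      M < ∑ n ∈ Finset.range m, (r ^ 2 ^ N) ^ 2 ^ n :=
    hcont.tendsto.eventually (eventually_gt_nhds (by simp only [hval]; linarith))
  have hmem : Set.Ioo (0 : ℝ) 1 ∈ nhdsWithin 1 (Set.Iio 1) := by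
    rw [show Set.Ioo (0:ℝ) 1 = Set.Iio 1 ∩ Set.Ioi 0 by ext; simp [and_comm]]
    exact Filter.inter_mem self_mem_nhdsWithin
      (nhdsWithin_le_nhds (Ioi_mem_nhds one_pos))
  filter_upwards [hmem, nhdsWithin_le_nhds hev] with r hr hMr
  have h0 : (0:ℝ) ≤ r ^ 2 ^ N := pow_nonneg hr.1.le _
  have h1 : r ^ 2 ^ N < 1 := pow_lt_one₀ hr.1.le hr.2 (by positivity)
  calc M ≤ ∑ n ∈ Finset.range m, (r ^ 2 ^ N) ^ 2 ^ n := hMr.le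
    _ ≤ ∑' n : ℕ, (r ^ 2 ^ N) ^ 2 ^ n :=
      Summable.sum_le_tsum _ (fun n _ => pow_nonneg h0 _) (summable_pow_two_pow_real h0 h1)

/-- For every `k N : ℕ`, as `r → 1⁻`, `|h(r·exp(2πik/2^N))| → ∞`,
where `h(z) = ∑ z^(2^n)`. -/
theorem stmt_4 (k N : ℕ) :
    Tendsto
      (fun r : ℝ =>
        ‖∑' n : ℕ, ((r : ℂ) * Complex.exp (2 * Real.pi * Complex.I * k / 2 ^ N)) ^ (2 ^ n)‖)
      (nhdsWithin 1 (Set.Iio 1)) atTop := by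
  set c : ℂ := Complex.exp (2 * Real.pi * Complex.I * k / 2 ^ N) with hc
  have hcnorm : ‖c‖ = 1 := by
    have harg : (2 * (Real.pi : ℂ) * Complex.I * k / 2 ^ N)
        = ((2 * Real.pi * k / 2 ^ N : ℝ) : ℂ) * Complex.I := by
      push_cast; ring
    rw [hc, harg, Complex.norm_exp_ofReal_mul_I]
  have hcN : c ^ 2 ^ N = 1 := by
    rw [hc, ← Complex.exp_nat_mul]
    have h2 : ((2:ℂ) ^ N) ≠ 0 := pow_ne_zero _ two_ne_zero
    have : ((2 ^ N : ℕ) : ℂ) * (2 * Real.pi * Complex.I * k / 2 ^ N)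
        = ((k : ℤ) : ℂ) * (2 * Real.pi * Complex.I) := by
      push_cast
      field_simp
    rw [this, Complex.exp_int_mul_two_pi_mul_I]
  -- lower bound
  have key : ∀ r : ℝ, 0 ≤ r → r < 1 →
      (∑' n : ℕ, (r ^ 2 ^ N) ^ 2 ^ n) - N ≤ ‖∑' n : ℕ, ((r : ℂ) * c) ^ 2 ^ n‖ := by
    intro r h0 h1
    have hznorm : ‖(r : ℂ) * c‖ < 1 := by
      rw [norm_mul, hcnorm, mul_one, Complex.norm_real, Real.norm_eq_abs, abs_of_nonneg h0]
      exact h1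
    have hsum := summable_pow_two_pow hznorm
    have hsplit := Summable.sum_add_tsum_nat_add N hsum
    have htail : ∀ n : ℕ, ((r : ℂ) * c) ^ 2 ^ (n + N) = ((r ^ 2 ^ N : ℝ) : ℂ) ^ 2 ^ n := by
      intro n
      have h : ((r:ℂ) * c) ^ 2 ^ (n + N) = (((r:ℂ) * c) ^ 2 ^ N) ^ 2 ^ n := by
        rw [← pow_mul, ← pow_add, add_comm]
      rw [h, mul_pow, hcN, mul_one]
      push_cast
      ring
    have hxre : r ^ 2 ^ N < 1 := pow_lt_one₀ h0 h1 (by positivity)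
    have h0x : (0:ℝ) ≤ r ^ 2 ^ N := pow_nonneg h0 _
    have hsumR := summable_pow_two_pow_real h0x hxre
    have htailval : ∑' n : ℕ, ((r : ℂ) * c) ^ 2 ^ (n + N)
        = ((∑' n : ℕ, (r ^ 2 ^ N) ^ 2 ^ n : ℝ) : ℂ) := by
      rw [Complex.ofReal_tsum]
      exact tsum_congr fun n => by rw [htail n]; push_cast; ring
    have heq : ∑' n : ℕ, ((r : ℂ) * c) ^ 2 ^ n
        = (∑ i ∈ Finset.range N, ((r : ℂ) * c) ^ 2 ^ i)
          + ((∑' n : ℕ, (r ^ 2 ^ N) ^ 2 ^ n : ℝ) : ℂ) := by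
      rw [← htailval, hsplit]
    rw [heq]
    have hnorm1 : ‖∑ i ∈ Finset.range N, ((r : ℂ) * c) ^ 2 ^ i‖ ≤ N := by
      calc ‖∑ i ∈ Finset.range N, ((r : ℂ) * c) ^ 2 ^ i‖
          ≤ ∑ i ∈ Finset.range N, ‖((r : ℂ) * c) ^ 2 ^ i‖ := norm_sum_le _ _
        _ ≤ ∑ i ∈ Finset.range N, 1 := Finset.sum_le_sum fun i _ => by
            rw [norm_pow]; exact pow_le_one₀ (norm_nonneg _) hznorm.le
        _ = N := by simp
    have htnorm : ‖((∑' n : ℕ, (r ^ 2 ^ N) ^ 2 ^ n : ℝ) : ℂ)‖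
        = ∑' n : ℕ, (r ^ 2 ^ N) ^ 2 ^ n := by
      rw [Complex.norm_real, Real.norm_eq_abs,
        abs_of_nonneg (tsum_nonneg fun n => pow_nonneg h0x _)]
    calc (∑' n : ℕ, (r ^ 2 ^ N) ^ 2 ^ n) - N
        = ‖((∑' n : ℕ, (r ^ 2 ^ N) ^ 2 ^ n : ℝ) : ℂ)‖ - ‖∑ i ∈ Finset.range N, ((r : ℂ) * c) ^ 2 ^ i‖
          + (‖∑ i ∈ Finset.range N, ((r : ℂ) * c) ^ 2 ^ i‖ - N) := by rw [htnorm]; ring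
      _ ≤ ‖((∑' n : ℕ, (r ^ 2 ^ N) ^ 2 ^ n : ℝ) : ℂ)‖ - ‖∑ i ∈ Finset.range N, ((r : ℂ) * c) ^ 2 ^ i‖ := by
          linarith
      _ ≤ ‖(∑ i ∈ Finset.range N, ((r : ℂ) * c) ^ 2 ^ i) + ((∑' n : ℕ, (r ^ 2 ^ N) ^ 2 ^ n : ℝ) : ℂ)‖ := by
          have := norm_add_le (-(∑ i ∈ Finset.range N, ((r : ℂ) * c) ^ 2 ^ i))
            ((∑ i ∈ Finset.range N, ((r : ℂ) * c) ^ 2 ^ i) + ((∑' n : ℕ, (r ^ 2 ^ N) ^ 2 ^ n : ℝ) : ℂ))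
          simp only [neg_add_cancel_left, norm_neg] at this
          linarith
  have hmem : Set.Ioo (0 : ℝ) 1 ∈ nhdsWithin 1 (Set.Iio 1) := by
    rw [show Set.Ioo (0:ℝ) 1 = Set.Iio 1 ∩ Set.Ioi 0 by ext; simp [and_comm]]
    exact Filter.inter_mem self_mem_nhdsWithin
      (nhdsWithin_le_nhds (Ioi_mem_nhds one_pos))
  have hg : Tendsto (fun r : ℝ => (∑' n : ℕ, (r ^ 2 ^ N) ^ 2 ^ n) - N)
      (nhdsWithin 1 (Set.Iio 1)) atTop :=
    tendsto_atTop_add_const_right _ _ (real_tail_tendsto N)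
  apply tendsto_atTop_mono' _ _ hg
  filter_upwards [hmem] with r hr
  exact key r hr.1.le hr.2
end

section
/- The function h(z) = ∑_{n=0}^∞ z^{2^n} admits no analytic continuation past any point of the unit circle: there is no point p with |p| = 1, no open neighborhood W of p, and no holomorphic function g on W agreeing with h on W ∩ 𝔻 with W ∩ 𝔻 ≠ ∅. -/
open Metric Filter Topology Complex

private lemma lac_summable {z : ℂ} (hz : ‖z‖ < 1) : Summable fun n : ℕ => z ^ 2 ^ n := by
  apply Summable.of_norm_bounded
    (summable_geometric_of_lt_one (norm_nonneg z) hz)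
  intro n
  rw [norm_pow]
  exact pow_le_pow_of_le_one (norm_nonneg z) hz.le (Nat.lt_two_pow_self (n := n)).le

private lemma lac_summable_real {r : ℝ} (h0 : 0 ≤ r) (h1 : r < 1) :
    Summable fun n : ℕ => r ^ 2 ^ n := by
  apply Summable.of_norm_bounded (summable_geometric_of_lt_one h0 h1)
  intro n
  rw [Real.norm_eq_abs, _root_.abs_pow, _root_.abs_of_nonneg h0]
  exact pow_le_pow_of_le_one h0 h1.le (Nat.lt_two_pow_self (n := n)).le

private lemma H_lb {r : ℝ} (h0 : 0 ≤ r) (h1 : r < 1) (N : ℕ) :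
    (N + 1 : ℝ) * r ^ 2 ^ N ≤ ∑' n : ℕ, r ^ 2 ^ n := by
  have hsum := lac_summable_real h0 h1
  have h2 : ∑ n ∈ Finset.range (N + 1), r ^ 2 ^ N ≤ ∑ n ∈ Finset.range (N + 1), r ^ 2 ^ n :=
    Finset.sum_le_sum fun n hn => pow_le_pow_of_le_one h0 h1.le
      (Nat.pow_le_pow_right (by norm_num) (Nat.lt_succ_iff.mp (Finset.mem_range.mp hn)))
  calc (N + 1 : ℝ) * r ^ 2 ^ N = ∑ _n ∈ Finset.range (N + 1), r ^ 2 ^ N := by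
        rw [Finset.sum_const, Finset.card_range]; push_cast; ring
    _ ≤ ∑ n ∈ Finset.range (N + 1), r ^ 2 ^ n := h2
    _ ≤ ∑' n : ℕ, r ^ 2 ^ n := Summable.sum_le_tsum _ (fun n _ => pow_nonneg h0 _) hsum

private lemma H_tendsto :
    Tendsto (fun r : ℝ => ∑' n : ℕ, r ^ 2 ^ n) (𝓝[Set.Ioo (0:ℝ) 1] 1) atTop := by
  rw [Filter.tendsto_atTop]
  intro C
  obtain ⟨N, hN⟩ : ∃ N : ℕ, C < N + 1 := ⟨⌈C⌉₊, by have := Nat.le_ceil C; push_cast; linarith⟩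
  have hcont : Tendsto (fun r : ℝ => (N + 1 : ℝ) * r ^ 2 ^ N) (𝓝[Set.Ioo (0:ℝ) 1] 1)
      (𝓝 ((N + 1 : ℝ) * 1 ^ 2 ^ N)) :=
    ((continuous_const.mul (continuous_pow (2 ^ N))).tendsto 1).mono_left nhdsWithin_le_nhds
  have hev : ∀ᶠ r in 𝓝[Set.Ioo (0:ℝ) 1] 1, C ≤ (N + 1 : ℝ) * r ^ 2 ^ N := by
    apply hcont.eventually_const_le
    simpa using hN
  filter_upwards [hev, self_mem_nhdsWithin] with r hr hr'
  exact hr.trans (H_lb hr'.1.le hr'.2 N)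

private lemma key_lb {ζ : ℂ} {m : ℕ} (hζ : ζ ^ 2 ^ m = 1) {r : ℝ} (hr : r ∈ Set.Ioo (0:ℝ) 1) :
    (∑' n : ℕ, (r ^ 2 ^ m : ℝ) ^ 2 ^ n) - m ≤ ‖∑' n : ℕ, ((r : ℂ) * ζ) ^ 2 ^ n‖ := by
  have hζn : ‖ζ‖ = 1 := by
    have h1 : ‖ζ‖ ^ 2 ^ m = 1 := by rw [← norm_pow, hζ, norm_one]
    rcases lt_trichotomy ‖ζ‖ 1 with hlt | heq | hgt
    · exact absurd h1 (by nlinarith [pow_lt_one₀ (norm_nonneg ζ) hlt (by positivity : 2 ^ m ≠ 0)])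
    · exact heq
    · exact absurd h1 (by nlinarith [one_lt_pow₀ hgt (by positivity : 2 ^ m ≠ 0)])
  have hrz : ‖(r : ℂ) * ζ‖ = r := by
    rw [norm_mul, hζn, mul_one, Complex.norm_real, Real.norm_eq_abs, _root_.abs_of_nonneg hr.1.le]
  have hrz1 : ‖(r : ℂ) * ζ‖ < 1 := by rw [hrz]; exact hr.2
  have hsum := lac_summable hrz1
  have hsplit := Summable.sum_add_tsum_nat_add (f := fun n : ℕ => ((r : ℂ) * ζ) ^ 2 ^ n) m hsum
  have htail : ∀ i : ℕ, ((r : ℂ) * ζ) ^ 2 ^ (i + m) = ((r ^ 2 ^ m : ℝ) ^ 2 ^ i : ℝ) := by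
    intro i
    have he : (2 : ℕ) ^ (i + m) = 2 ^ m * 2 ^ i := by rw [pow_add, mul_comm]
    rw [he, pow_mul, mul_pow, hζ, mul_one]
    push_cast
    ring
  have htail2 : (∑' i : ℕ, ((r : ℂ) * ζ) ^ 2 ^ (i + m)) =
      ((∑' i : ℕ, (r ^ 2 ^ m : ℝ) ^ 2 ^ i : ℝ) : ℂ) := by
    rw [Complex.ofReal_tsum]
    exact tsum_congr htail
  set T : ℝ := ∑' i : ℕ, (r ^ 2 ^ m : ℝ) ^ 2 ^ i with hT
  set S : ℂ := ∑ i ∈ Finset.range m, ((r : ℂ) * ζ) ^ 2 ^ i with hS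
  have hkey : S + (T : ℂ) = ∑' n : ℕ, ((r : ℂ) * ζ) ^ 2 ^ n := by
    rw [← hsplit, htail2]
  have hTnn : 0 ≤ T := tsum_nonneg fun i => pow_nonneg (pow_nonneg hr.1.le _) _
  have hSnorm : ‖S‖ ≤ m := by
    calc ‖S‖ ≤ ∑ i ∈ Finset.range m, ‖((r : ℂ) * ζ) ^ 2 ^ i‖ := norm_sum_le _ _
      _ ≤ ∑ _i ∈ Finset.range m, 1 := by
          apply Finset.sum_le_sum
          intro i _
          rw [norm_pow]
          exact pow_le_one₀ (norm_nonneg _) hrz1.le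
      _ = m := by simp
  have : T = ‖(T : ℂ)‖ := by rw [Complex.norm_real, Real.norm_eq_abs, _root_.abs_of_nonneg hTnn]
  calc T - m ≤ ‖(T : ℂ)‖ - ‖S‖ := by rw [← this]; linarith
    _ ≤ ‖S + (T : ℂ)‖ := by
        have := norm_add_le (-(S + (T:ℂ))) (S + (T:ℂ) + T - (S + (T:ℂ)))
        have h := norm_le_norm_add_norm_sub' S (T : ℂ)
        -- ‖T‖ ≤ ‖S + T‖ + ‖S‖ would suffice; derive directly:
        have h2 : ‖(T : ℂ)‖ ≤ ‖S + (T : ℂ)‖ + ‖S‖ := by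
          calc ‖(T : ℂ)‖ = ‖S + (T : ℂ) - S‖ := by ring_nf
            _ ≤ ‖S + (T : ℂ)‖ + ‖S‖ := norm_sub_le _ _
        linarith
    _ = ‖∑' n : ℕ, ((r : ℂ) * ζ) ^ 2 ^ n‖ := by rw [hkey]

private lemma dense_roots {p : ℂ} (hp : ‖p‖ = 1) {ε : ℝ} (hε : 0 < ε) :
    ∃ (ζ : ℂ) (m : ℕ), ζ ^ 2 ^ m = 1 ∧ ‖ζ - p‖ < ε := by
  obtain ⟨m, hm⟩ : ∃ m : ℕ, 2 * Real.pi * (1 / 2 : ℝ) ^ m < min ε 1 := by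
    obtain ⟨m, hm⟩ := exists_pow_lt_of_lt_one
      (div_pos (lt_min hε one_pos) (by positivity : (0:ℝ) < 2 * Real.pi))
      (by norm_num : (1/2 : ℝ) < 1)
    refine ⟨m, ?_⟩
    calc 2 * Real.pi * (1 / 2 : ℝ) ^ m < 2 * Real.pi * (min ε 1 / (2 * Real.pi)) := by
          apply mul_lt_mul_of_pos_left hm (by positivity)
      _ = min ε 1 := by field_simp
  have hm' : 2 * Real.pi / 2 ^ m < min ε 1 := by
    have hpow : (1 / 2 : ℝ) ^ m = 1 / 2 ^ m := by rw [div_pow, one_pow]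
    rwa [hpow, mul_one_div] at hm
  set θ : ℝ := p.arg with hθ
  set k : ℤ := round (θ * 2 ^ m / (2 * Real.pi)) with hk
  set a : ℝ := 2 * Real.pi * k / 2 ^ m with ha
  refine ⟨Complex.exp (a * Complex.I), m, ?_, ?_⟩
  · rw [← Complex.exp_nat_mul]
    have : (((2 ^ m : ℕ) : ℂ)) * ((a : ℝ) * Complex.I) = (k : ℂ) * (2 * Real.pi * Complex.I) := by
      have h2 : (((2 : ℝ) ^ m : ℝ) : ℂ) ≠ 0 := Complex.ofReal_ne_zero.mpr (by positivity)
      rw [ha]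
      push_cast
      field_simp
    rw [this, Complex.exp_int_mul_two_pi_mul_I]
  · have hpabs : ‖p‖ = 1 := hp
    have hpe : p = Complex.exp (θ * Complex.I) := by
      conv_lhs => rw [← Complex.norm_mul_exp_arg_mul_I p]
      rw [hpabs, Complex.ofReal_one, one_mul]
    have hdiff : Complex.exp (a * Complex.I) - p =
        Complex.exp (θ * Complex.I) * (Complex.exp (((a - θ : ℝ) : ℂ) * Complex.I) - 1) := by
      rw [hpe, mul_sub, mul_one, ← Complex.exp_add]
      push_cast
      ring_nf
    have hnorm1 : ‖Complex.exp ((θ : ℂ) * Complex.I)‖ = 1 := by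
      rw [Complex.norm_exp_ofReal_mul_I]
    have habs : |a - θ| ≤ Real.pi / 2 ^ m := by
      have h1 : a - θ = (2 * Real.pi / 2 ^ m) * (k - θ * 2 ^ m / (2 * Real.pi)) := by
        rw [ha]
        have : (2 : ℝ) ^ m ≠ 0 := by positivity
        field_simp
      rw [h1, abs_mul, _root_.abs_of_nonneg (by positivity : (0:ℝ) ≤ 2 * Real.pi / 2 ^ m)]
      have h2 : |(k : ℝ) - θ * 2 ^ m / (2 * Real.pi)| ≤ 1 / 2 := by
        rw [hk, abs_sub_comm]
        exact abs_sub_round _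
      calc 2 * Real.pi / 2 ^ m * |(k : ℝ) - θ * 2 ^ m / (2 * Real.pi)|
          ≤ 2 * Real.pi / 2 ^ m * (1 / 2) :=
            mul_le_mul_of_nonneg_left h2 (by positivity)
        _ = Real.pi / 2 ^ m := by ring
    have habs1 : ‖((a - θ : ℝ) : ℂ) * Complex.I‖ ≤ 1 := by
      rw [norm_mul, Complex.norm_I, mul_one, Complex.norm_real, Real.norm_eq_abs]
      calc |a - θ| ≤ Real.pi / 2 ^ m := habs
        _ ≤ 2 * Real.pi / 2 ^ m := by
            apply div_le_div_of_nonneg_right ?_ (by positivity)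
            · linarith [Real.pi_pos]
        _ ≤ 1 := le_of_lt (hm'.trans_le (min_le_right _ _))
    calc ‖Complex.exp (a * Complex.I) - p‖
        = ‖Complex.exp ((θ : ℂ) * Complex.I)‖ * ‖Complex.exp (((a - θ : ℝ) : ℂ) * Complex.I) - 1‖ := by
          rw [hdiff, norm_mul]
      _ = ‖Complex.exp (((a - θ : ℝ) : ℂ) * Complex.I) - 1‖ := by
          rw [hnorm1, one_mul]
      _ ≤ 2 * ‖((a - θ : ℝ) : ℂ) * Complex.I‖ := Complex.norm_exp_sub_one_le habs1
      _ = 2 * |a - θ| := by rw [norm_mul, Complex.norm_I, mul_one, Complex.norm_real, Real.norm_eq_abs]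
      _ ≤ 2 * (Real.pi / 2 ^ m) := by linarith
      _ = 2 * Real.pi / 2 ^ m := by ring
      _ < min ε 1 := hm'
      _ ≤ ε := min_le_left _ _

/-- `h(z) = ∑ z^(2^n)` admits no analytic continuation past any point of the unit circle. -/
theorem stmt_6 (h : ℂ → ℂ) (hh : ∀ z : ℂ, h z = ∑' n : ℕ, z ^ (2 ^ n)) :
    ¬ ∃ (p : ℂ) (W : Set ℂ) (g : ℂ → ℂ),
        ‖p‖ = 1 ∧ IsOpen W ∧ p ∈ W ∧ DifferentiableOn ℂ g W ∧
        (W ∩ ball (0 : ℂ) 1).Nonempty ∧ Set.EqOn g h (W ∩ ball (0 : ℂ) 1) := by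
  rintro ⟨p, W, g, hp, hW, hpW, hg, -, heq⟩
  obtain ⟨ε, hε, hball⟩ := Metric.isOpen_iff.mp hW p hpW
  obtain ⟨ζ, m, hζ1, hζp⟩ := dense_roots hp hε
  have hζW : ζ ∈ W := hball (by rwa [mem_ball, dist_eq_norm])
  set l := 𝓝[Set.Ioo (0:ℝ) 1] (1:ℝ) with hl
  have hlne : l.NeBot := by
    apply mem_closure_iff_nhdsWithin_neBot.mp
    rw [closure_Ioo (by norm_num : (0:ℝ) ≠ 1)]
    exact Set.right_mem_Icc.mpr (by norm_num)
  have hpow : Tendsto (fun r : ℝ => r ^ 2 ^ m) l l := by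
    rw [hl, tendsto_nhdsWithin_iff]
    constructor
    · have h1 : Tendsto (fun r : ℝ => r ^ 2 ^ m) (𝓝 1) (𝓝 ((1:ℝ) ^ 2 ^ m)) :=
        (continuous_pow (2 ^ m)).tendsto 1
      simpa using h1.mono_left nhdsWithin_le_nhds
    · filter_upwards [self_mem_nhdsWithin] with r hr
      exact ⟨pow_pos hr.1 _, pow_lt_one₀ hr.1.le hr.2 (by positivity)⟩
  have hHt : Tendsto (fun r : ℝ => (∑' n : ℕ, (r ^ 2 ^ m) ^ 2 ^ n) - m) l atTop :=
    tendsto_atTop_add_const_right l (-(m:ℝ)) (H_tendsto.comp hpow)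
  have hnormt : Tendsto (fun r : ℝ => ‖h ((r:ℂ) * ζ)‖) l atTop := by
    apply tendsto_atTop_mono' l ?_ hHt
    filter_upwards [self_mem_nhdsWithin] with r hr
    rw [hh]
    exact key_lb hζ1 hr
  have hrzt : Tendsto (fun r : ℝ => (r:ℂ) * ζ) l (𝓝 ζ) := by
    have h1 : Tendsto (fun r : ℝ => (r:ℂ) * ζ) (𝓝 (1:ℝ)) (𝓝 ((1:ℝ) * ζ)) :=
      (Complex.continuous_ofReal.mul continuous_const).tendsto 1
    simpa using h1.mono_left nhdsWithin_le_nhds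
  have hgW : ContinuousAt g ζ :=
    (hg.continuousOn.continuousAt (hW.mem_nhds hζW))
  have hgt : Tendsto (fun r : ℝ => g ((r:ℂ) * ζ)) l (𝓝 (g ζ)) := hgW.tendsto.comp hrzt
  have hζn : ‖ζ‖ = 1 := by
    have h1 : ‖ζ‖ ^ 2 ^ m = 1 := by rw [← norm_pow, hζ1, norm_one]
    rcases lt_trichotomy ‖ζ‖ 1 with hlt | heqn | hgt'
    · exact absurd h1 (by nlinarith [pow_lt_one₀ (norm_nonneg ζ) hlt (by positivity : 2 ^ m ≠ 0)])
    · exact heqn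
    · exact absurd h1 (by nlinarith [one_lt_pow₀ hgt' (by positivity : 2 ^ m ≠ 0)])
  have heqev : ∀ᶠ r : ℝ in l, g ((r:ℂ) * ζ) = h ((r:ℂ) * ζ) := by
    have hWev : ∀ᶠ r : ℝ in l, (r:ℂ) * ζ ∈ W := hrzt (hW.mem_nhds hζW)
    filter_upwards [hWev, self_mem_nhdsWithin] with r hrW hr
    refine heq ⟨hrW, ?_⟩
    rw [mem_ball, dist_zero_right, norm_mul, hζn, mul_one, Complex.norm_real,
      Real.norm_eq_abs, _root_.abs_of_nonneg hr.1.le]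
    exact hr.2
  have hfinal : Tendsto (fun r : ℝ => ‖h ((r:ℂ) * ζ)‖) l (𝓝 ‖g ζ‖) := by
    apply Tendsto.congr' ?_ hgt.norm
    filter_upwards [heqev] with r e
    rw [e]
  exact not_tendsto_atTop_of_tendsto_nhds hfinal hnormt
end

section
/- The integral G(z) = ∫_C exp(−2πiuz + iπu²)·Γ(u) du over the line C : t ↦ 1 + (1+i)t, t ∈ ℝ, converges absolutely for every z ∈ ℂ and defines an entire function. -/
open MeasureTheory Complex Real Set

lemma absGamma_le (s : ℂ) (hs : 0 < s.re) :
    ‖Complex.Gamma s‖ ≤ Real.Gamma s.re := by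
  rw [Complex.Gamma_eq_integral hs, Real.Gamma_eq_integral hs, Complex.GammaIntegral]
  refine le_trans (norm_integral_le_integral_norm _) (le_of_eq ?_)
  refine setIntegral_congr_fun measurableSet_Ioi fun x hx => ?_
  rw [norm_mul,
    Complex.norm_cpow_eq_rpow_re_of_pos hx, Complex.norm_real, Real.norm_eq_abs,
    _root_.abs_of_nonneg (Real.exp_pos (-x)).le]
  simp


lemma Gamma_add_nat (s : ℂ) (n : ℕ) (h : ∀ k : ℕ, k < n → s + k ≠ 0) :
    Complex.Gamma (s + n) = (∏ k ∈ Finset.range n, (s + k)) * Complex.Gamma s := by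
  induction n with
  | zero => simp
  | succ n ih =>
    have h' : ∀ k : ℕ, k < n → s + k ≠ 0 := fun k hk => h k (Nat.lt_succ_of_lt hk)
    have e : s + (n+1 : ℕ) = (s + n) + 1 := by push_cast; ring
    rw [e, Complex.Gamma_add_one _ (h n (Nat.lt_succ_self n)), ih h',
      Finset.prod_range_succ]
    ring


lemma exp_half_int : ∫ s in Ioi (0:ℝ), Real.exp (-(1/2) * s) = 2 := by
  have h := integral_exp_neg_mul_rpow (one_pos) (by norm_num : (0:ℝ) < 1/2)
  simp only [Real.rpow_one] at h
  rw [h]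
  norm_num


lemma gammaA {x : ℝ} (hx : 0 ≤ x) :
    Real.Gamma (1 + x) ≤ 2 * Real.exp (x + 2 * x ^ 2) := by
  have h1 : (0:ℝ) < 1 + x := by linarith
  rw [Real.Gamma_eq_integral h1]
  have key : ∀ s ∈ Ioi (0:ℝ), Real.exp (-s) * s ^ (1 + x - 1) ≤
      Real.exp (x + 2 * x ^ 2) * Real.exp (-(1/2) * s) := by
    intro s hs
    have hs0 : (0:ℝ) < s := hs
    have hl : x * Real.log s ≤ s/2 + 2*x^2 + x := by
      rcases le_or_gt s 1 with h | h
      · have hls : Real.log s ≤ 0 := Real.log_nonpos hs0.le h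
        nlinarith [mul_nonneg hx (neg_nonneg.2 hls)]
      · have hc : (0:ℝ) < 2 * x + 2 := by linarith
        have l1 : Real.log s - Real.log (2*x+2) ≤ s / (2*x+2) - 1 := by
          rw [← Real.log_div (by linarith) hc.ne']
          exact Real.log_le_sub_one_of_pos (by positivity)
        have l2 : Real.log (2*x+2) ≤ 2*x + 1 := by
          have := Real.log_le_sub_one_of_pos hc
          linarith
        have l3 : Real.log s ≤ s / (2*x+2) + 2*x + 1 := by linarith
        have l4 : x * Real.log s ≤ x * (s / (2*x+2) + 2*x + 1) :=
          mul_le_mul_of_nonneg_left l3 hx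
        have l5 : x * (s / (2*x+2)) ≤ s / 2 := by
          rw [mul_div_assoc', div_le_div_iff₀ hc two_pos]
          nlinarith
        nlinarith
    rw [show (1 + x - 1) = x by ring, Real.rpow_def_of_pos hs0, ← Real.exp_add, ← Real.exp_add]
    exact Real.exp_le_exp.2 (by linarith)
  calc ∫ s in Ioi (0:ℝ), Real.exp (-s) * s ^ (1 + x - 1)
      ≤ ∫ s in Ioi (0:ℝ), Real.exp (x + 2 * x ^ 2) * Real.exp (-(1/2) * s) := by
        refine setIntegral_mono_on (Real.GammaIntegral_convergent h1)
          ((exp_neg_integrableOn_Ioi 0 (by norm_num : (0:ℝ) < 1/2)).const_mul _)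
          measurableSet_Ioi key
    _ = Real.exp (x + 2 * x ^ 2) * ∫ s in Ioi (0:ℝ), Real.exp (-(1/2) * s) := by
        rw [integral_const_mul]
    _ = 2 * Real.exp (x + 2 * x ^ 2) := by rw [exp_half_int]; ring


lemma gamma_line_bound (t : ℝ) :
    ‖Complex.Gamma (1 + (1 + I) * t)‖ ≤ 2 * Real.exp (2*t^2 + |t| + 12) := by
  set u : ℂ := 1 + (1 + I) * t with hu
  have hure : u.re = 1 + t := by simp [hu]
  have huim : u.im = t := by simp [hu]
  rcases le_or_gt 0 t with ht | ht
  · -- t ≥ 0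
    have h1 : 0 < u.re := by rw [hure]; linarith
    calc ‖Complex.Gamma u‖ ≤ Real.Gamma u.re := absGamma_le u h1
      _ = Real.Gamma (1 + t) := by rw [hure]
      _ ≤ 2 * Real.exp (t + 2 * t ^ 2) := gammaA ht
      _ ≤ 2 * Real.exp (2*t^2 + |t| + 12) := by
          have : t + 2 * t^2 ≤ 2*t^2 + |t| + 12 := by
            rw [_root_.abs_of_nonneg ht]; linarith
          have := Real.exp_le_exp.2 this
          linarith
  · -- t < 0
    set n : ℕ := ⌈-t⌉₊ + 1 with hn
    have hc1 : -t ≤ (⌈-t⌉₊ : ℝ) := Nat.le_ceil _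
    have hc2 : (⌈-t⌉₊ : ℝ) < -t + 1 := Nat.ceil_lt_add_one (by linarith)
    have hn1 : -t + 1 ≤ (n : ℝ) := by push_cast [hn]; linarith
    have hn2 : (n : ℝ) < -t + 2 := by push_cast [hn]; linarith
    have hne : ∀ k : ℕ, k < n → u + k ≠ 0 := by
      intro k _ heq
      have him : (u + (k:ℂ)).im = 0 := by rw [heq]; simp
      simp [huim] at him
      -- him : t = 0? compute
      have : t = 0 := by simpa [Complex.add_im, huim] using him
      linarith
    have hrec := Gamma_add_nat u n hne
    -- each factor has abs ≥ 1/2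
    have hfac : ∀ k ∈ Finset.range n, (1/2 : ℝ) ≤ ‖u + k‖ := by
      intro k _
      have hre : (u + (k:ℂ)).re = 1 + t + k := by simp [Complex.add_re, hure]
      have him : (u + (k:ℂ)).im = t := by simp [Complex.add_im, huim]
      have hsq : (1/2 : ℝ)^2 ≤ (‖u + k‖)^2 := by
        rw [Complex.sq_norm, Complex.normSq_apply, hre, him]
        have hk : (0:ℝ) ≤ (k:ℝ) := Nat.cast_nonneg k
        nlinarith [sq_nonneg ((1 + t + (k:ℝ)) + t), sq_nonneg (1 + (k:ℝ))]
      nlinarith [norm_nonneg (u + k)]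
    have hprod : ((1:ℝ)/2)^n ≤ ∏ k ∈ Finset.range n, ‖u + k‖ := by
      have e : ((1:ℝ)/2)^n = ∏ _k ∈ Finset.range n, (1/2:ℝ) := by simp
      rw [e]
      exact Finset.prod_le_prod (fun i _ => by norm_num) hfac
    have habs : ‖Complex.Gamma (u + n)‖ =
        (∏ k ∈ Finset.range n, ‖u + k‖) * ‖Complex.Gamma u‖ := by
      rw [hrec, norm_mul, norm_prod]
    have hkey : ‖Complex.Gamma u‖ ≤ 2^n * ‖Complex.Gamma (u + n)‖ := by
      have h0 : (0:ℝ) ≤ ‖Complex.Gamma u‖ := norm_nonneg _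
      have h1 : ((1:ℝ)/2)^n * ‖Complex.Gamma u‖ ≤
          ‖Complex.Gamma (u + n)‖ := by
        rw [habs]
        exact mul_le_mul_of_nonneg_right hprod h0
      have h2 : ((1:ℝ)/2)^n * (2:ℝ)^n = 1 := by rw [← mul_pow]; norm_num
      nlinarith [pow_pos (by norm_num : (0:ℝ) < 2) n, pow_pos (by norm_num : (0:ℝ) < 1/2) n]
    have hren : (u + (n:ℂ)).re = 1 + t + n := by simp [Complex.add_re, hure]
    have hpos : 0 < (u + (n:ℂ)).re := by rw [hren]; linarith
    have hGn : ‖Complex.Gamma (u + n)‖ ≤ 2 * Real.exp 10 := by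
      calc ‖Complex.Gamma (u + n)‖ ≤ Real.Gamma ((u + (n:ℂ)).re) :=
            absGamma_le _ hpos
        _ = Real.Gamma (1 + (t + n)) := by rw [hren]; ring_nf
        _ ≤ 2 * Real.exp ((t + n) + 2 * (t + n)^2) := gammaA (by linarith)
        _ ≤ 2 * Real.exp 10 := by
            have hb : (t + n) + 2 * (t + n)^2 ≤ 10 := by nlinarith
            have := Real.exp_le_exp.2 hb
            linarith
    have h2n : (2:ℝ)^n ≤ Real.exp (|t| + 2) := by
      have habs_t : |t| = -t := abs_of_neg ht
      calc (2:ℝ)^n ≤ (Real.exp 1)^n := by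
            apply pow_le_pow_left₀ (by norm_num)
            have := Real.add_one_le_exp 1
            linarith
        _ = Real.exp n := Real.exp_one_pow n
        _ ≤ Real.exp (|t| + 2) := Real.exp_le_exp.2 (by linarith)
    calc ‖Complex.Gamma u‖ ≤ 2^n * ‖Complex.Gamma (u + n)‖ := hkey
      _ ≤ Real.exp (|t| + 2) * (2 * Real.exp 10) := by
          apply mul_le_mul h2n hGn (norm_nonneg _) (Real.exp_pos _).le
      _ = 2 * Real.exp (|t| + 12) := by
          rw [show (|t| + 12 : ℝ) = |t| + 2 + 10 by ring]; simp [Real.exp_add]; ring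
      _ ≤ 2 * Real.exp (2*t^2 + |t| + 12) := by
          have : |t| + 12 ≤ 2*t^2 + |t| + 12 := by nlinarith
          have := Real.exp_le_exp.2 this
          linarith


lemma re_exponent (z : ℂ) (t : ℝ) :
    (-2 * Real.pi * I * (1 + (1 + I) * t) * z + Real.pi * I * (1 + (1 + I) * t) ^ 2).re
      = 2 * Real.pi * ((1 + t) * z.im + t * z.re) - 2 * Real.pi * t - 2 * Real.pi * t ^ 2 := by
  simp [Complex.add_re, Complex.mul_re, Complex.mul_im, Complex.add_im, pow_two]
  ring


lemma integrable_aux (a b c : ℝ) (ha : 0 < a) :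
    Integrable (fun t : ℝ => Real.exp (-a * t ^ 2 + b * |t| + c)) := by
  have h := (integrable_exp_neg_mul_sq (show (0:ℝ) < a/2 by linarith)).const_mul
    (Real.exp (c + b ^ 2 / (2 * a)))
  refine h.mono' ?_ ?_
  · apply Continuous.aestronglyMeasurable
    continuity
  · filter_upwards with t
    rw [Real.norm_eq_abs, _root_.abs_of_nonneg (Real.exp_pos _).le, ← Real.exp_add]
    apply Real.exp_le_exp.2
    have key : 0 ≤ (a * |t| - b)^2 := sq_nonneg _
    have hsq : |t|^2 = t^2 := sq_abs t
    have h1 : a * |t| * |t| = a * t^2 := by rw [← hsq]; ring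
    have h2 : b * |t| ≤ (a/2) * t^2 + b^2/(2*a) := by
      have e : b^2/(2*a)*(2*a) = b^2 := div_mul_cancel₀ _ (by positivity)
      nlinarith [key, _root_.sq_abs t, ha, e]
    linarith

-- the integrand
noncomputable def Fi (z : ℂ) (t : ℝ) : ℂ :=
  Complex.exp (-2 * Real.pi * I * (1 + (1 + I) * t) * z +
      Real.pi * I * (1 + (1 + I) * t) ^ 2) *
    Complex.Gamma (1 + (1 + I) * t) * (1 + I)

lemma norm_Fi_le {R : ℝ} (z : ℂ) (t : ℝ) (hz : ‖z‖ ≤ R) :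
    ‖Fi z t‖ ≤ 4 * Real.exp (-(2*Real.pi-2) * t^2 + (4*Real.pi*R + 2*Real.pi + 1) * |t|
      + (2*Real.pi*R + 12)) := by
  have hR : 0 ≤ R := le_trans (norm_nonneg z) hz
  have hπ := Real.pi_pos
  have h1 : ‖Fi z t‖ = Real.exp ((-2 * Real.pi * I * (1 + (1 + I) * t) * z +
      Real.pi * I * (1 + (1 + I) * t) ^ 2).re) *
      ‖Complex.Gamma (1 + (1 + I) * t)‖ * ‖1 + I‖ := by
    rw [Fi, norm_mul, norm_mul, Complex.norm_exp]
  have h2 : ‖1 + I‖ ≤ 2 := by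
    calc ‖1 + I‖ ≤ ‖1‖ + ‖I‖ := norm_add_le _ _
      _ = 2 := by simp; norm_num
  have h3 : (-2 * Real.pi * I * (1 + (1 + I) * t) * z +
      Real.pi * I * (1 + (1 + I) * t) ^ 2).re
      ≤ 2*Real.pi*R + 4*Real.pi*R*|t| + 2*Real.pi*|t| - 2*Real.pi*t^2 := by
    rw [re_exponent]
    have him : |z.im| ≤ R := le_trans (le_trans (Complex.abs_im_le_norm z) (le_of_eq rfl)) hz
    have hre : |z.re| ≤ R := le_trans (Complex.abs_re_le_norm z) hz
    have e1 : (1 + t) * z.im ≤ (1 + |t|) * R := by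
      calc (1 + t) * z.im ≤ |(1 + t) * z.im| := le_abs_self _
        _ = |1 + t| * |z.im| := abs_mul _ _
        _ ≤ (1 + |t|) * R := by
            apply mul_le_mul _ him (abs_nonneg _) (by positivity)
            calc |1 + t| ≤ |(1:ℝ)| + |t| := abs_add_le _ _
              _ = 1 + |t| := by norm_num
    have e2 : t * z.re ≤ |t| * R := by
      calc t * z.re ≤ |t * z.re| := le_abs_self _
        _ = |t| * |z.re| := abs_mul _ _
        _ ≤ |t| * R := mul_le_mul_of_nonneg_left hre (abs_nonneg _)
    have e3 : -2*Real.pi*t ≤ 2*Real.pi*|t| := by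
      have := neg_abs_le t
      nlinarith
    nlinarith
  rw [h1]
  have hg := gamma_line_bound t
  have he := Real.exp_le_exp.2 h3
  have hpos1 : (0:ℝ) < Real.exp ((-2 * Real.pi * I * (1 + (1 + I) * t) * z +
      Real.pi * I * (1 + (1 + I) * t) ^ 2).re) := Real.exp_pos _
  calc Real.exp _ * ‖Complex.Gamma (1 + (1 + I) * t)‖ * ‖1 + I‖
      ≤ Real.exp (2*Real.pi*R + 4*Real.pi*R*|t| + 2*Real.pi*|t| - 2*Real.pi*t^2)
        * (2 * Real.exp (2*t^2 + |t| + 12)) * 2 := by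
        apply mul_le_mul _ h2 (norm_nonneg _) (by positivity)
        apply mul_le_mul he hg (norm_nonneg _) (Real.exp_pos _).le
    _ = 4 * Real.exp (-(2*Real.pi-2) * t^2 + (4*Real.pi*R + 2*Real.pi + 1) * |t|
        + (2*Real.pi*R + 12)) := by
        rw [show rexp (2 * π * R + 4 * π * R * |t| + 2 * π * |t| - 2 * π * t ^ 2) *
            (2 * rexp (2 * t ^ 2 + |t| + 12)) * 2 =
            4 * (rexp (2 * π * R + 4 * π * R * |t| + 2 * π * |t| - 2 * π * t ^ 2) *
              rexp (2 * t ^ 2 + |t| + 12)) by ring, ← Real.exp_add]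
        congr 1
        ring

lemma u_ne_neg_nat (t : ℝ) : ∀ m : ℕ, (1 + (1 + I) * (t:ℂ)) ≠ -m := by
  intro m heq
  have him := congrArg Complex.im heq
  simp at him
  have hre := congrArg Complex.re heq
  rw [him] at hre
  simp at hre
  have : (0:ℝ) ≤ (m:ℝ) := Nat.cast_nonneg m
  linarith

lemma cont_Fi (z : ℂ) : Continuous (fun t : ℝ => Fi z t) := by
  unfold Fi
  apply Continuous.mul _ continuous_const
  apply Continuous.mul
  · apply Complex.continuous_exp.comp
    fun_prop
  · rw [continuous_iff_continuousAt]
    intro t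
    have h1 : ContinuousAt Complex.Gamma (1 + (1 + I) * (t:ℂ)) :=
      (Complex.differentiableAt_Gamma _ (u_ne_neg_nat t)).continuousAt
    exact ContinuousAt.comp (g := Complex.Gamma) (f := fun s : ℝ => 1 + (1 + I) * (s : ℂ)) h1 (by fun_prop)

lemma int_Fi (z : ℂ) : Integrable (fun t : ℝ => Fi z t) := by
  have hπ : (0:ℝ) < 2 * Real.pi - 2 := by
    have := Real.pi_gt_three; linarith
  refine Integrable.mono'
    ((integrable_aux (2*Real.pi-2) (4*Real.pi*‖z‖ + 2*Real.pi + 1) (2*Real.pi*‖z‖ + 12)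
      hπ).const_mul 4) ((cont_Fi z).aestronglyMeasurable) ?_
  filter_upwards with t
  exact norm_Fi_le z t le_rfl

/-- The Laplace-type integral `G(z) = ∫_C exp(−2πiuz + iπu²) Γ(u) du` over the line
`C : t ↦ 1 + (1+i)t` converges absolutely for every `z` and defines an entire function. -/
theorem stmt_14 :
    (∀ z : ℂ,
        Integrable
          (fun t : ℝ =>
            Complex.exp (-2 * Real.pi * I * (1 + (1 + I) * t) * z +
                Real.pi * I * (1 + (1 + I) * t) ^ 2) *
              Complex.Gamma (1 + (1 + I) * t) * (1 + I))) ∧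
    Differentiable ℂ
      (fun z : ℂ =>
        ∫ t : ℝ,
          Complex.exp (-2 * Real.pi * I * (1 + (1 + I) * t) * z +
              Real.pi * I * (1 + (1 + I) * t) ^ 2) *
            Complex.Gamma (1 + (1 + I) * t) * (1 + I)) := by
  have hπ : (0:ℝ) < 2 * Real.pi - 2 := by have := Real.pi_gt_three; linarith
  have hπ0 := Real.pi_pos
  refine ⟨fun z => int_Fi z, ?_⟩
  intro z₀
  set R : ℝ := ‖z₀‖ + 1 with hR
  have hR0 : (0:ℝ) ≤ R := by positivity
  -- bound for the derivative
  set bnd : ℝ → ℝ := fun t => 24 * Real.pi *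
    Real.exp (-(2*Real.pi-2) * t^2 + (4*Real.pi*R + 2*Real.pi + 2) * |t| + (2*Real.pi*R + 12))
    with hbnd
  have key := hasDerivAt_integral_of_dominated_loc_of_deriv_le (μ := volume)
    (F := fun z t => Fi z t)
    (F' := fun z t => (-2 * Real.pi * I * (1 + (1 + I) * t)) * Fi z t)
    (x₀ := z₀) (s := Metric.ball z₀ 1) (bound := bnd) (Metric.ball_mem_nhds z₀ one_pos)
    (Filter.Eventually.of_forall fun z => (cont_Fi z).aestronglyMeasurable)
    (int_Fi z₀)
    (Continuous.aestronglyMeasurable (by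
      apply Continuous.mul _ (cont_Fi z₀)
      fun_prop))
    ?_ ?_ ?_
  · exact key.2.differentiableAt
  · -- bound
    filter_upwards with t z hz
    have hz' : ‖z‖ ≤ R := by
      have := mem_ball_iff_norm.mp hz
      have h2 : ‖z‖ - ‖z₀‖ ≤ ‖z - z₀‖ := norm_sub_norm_le _ _
      rw [hR]; linarith
    have h1 : ‖(-2 * (Real.pi:ℂ) * I * (1 + (1 + I) * t)) * Fi z t‖ =
        ‖-2 * (Real.pi:ℂ) * I * (1 + (1 + I) * t)‖ * ‖Fi z t‖ := by
      rw [norm_mul]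
    rw [h1]
    have h2 : ‖-2 * (Real.pi:ℂ) * I * (1 + (1 + I) * t)‖ ≤
        6 * Real.pi * Real.exp |t| := by
      have e1 : ‖-2 * (Real.pi:ℂ) * I * (1 + (1 + I) * t)‖ =
          2 * Real.pi * ‖1 + (1 + I) * t‖ := by
        rw [norm_mul, norm_mul, norm_mul]
        simp [Complex.norm_real, _root_.abs_of_nonneg hπ0.le]
      rw [e1]
      have e2 : ‖1 + (1 + I) * (t:ℂ)‖ ≤ 1 + 2 * |t| := by
        calc ‖1 + (1 + I) * t‖ ≤ ‖1‖ + ‖(1 + I) * t‖ :=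
              norm_add_le _ _
          _ = 1 + ‖1 + I‖ * |t| := by
              rw [norm_mul, Complex.norm_real]; simp
          _ ≤ 1 + 2 * |t| := by
              have : ‖1 + I‖ ≤ 2 := by
                calc ‖1 + I‖ ≤ ‖1‖ + ‖I‖ :=
                    norm_add_le _ _
                  _ = 2 := by simp; norm_num
              nlinarith [abs_nonneg t]
      have e3 : 1 + 2 * |t| ≤ 3 * Real.exp |t| := by
        have := Real.add_one_le_exp |t|
        nlinarith [abs_nonneg t, Real.exp_pos |t|]
      nlinarith [norm_nonneg (1 + (1 + I) * (t:ℂ)), Real.exp_pos |t|]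
    have h3 := norm_Fi_le z t hz'
    calc ‖-2 * (Real.pi:ℂ) * I * (1 + (1 + I) * t)‖ * ‖Fi z t‖
        ≤ (6 * Real.pi * Real.exp |t|) * (4 * Real.exp (-(2*Real.pi-2) * t^2 +
            (4*Real.pi*R + 2*Real.pi + 1) * |t| + (2*Real.pi*R + 12))) := by
          apply mul_le_mul h2 h3 (norm_nonneg _) (by positivity)
      _ = bnd t := by
          rw [hbnd]
          rw [show (6 * Real.pi * Real.exp |t|) * (4 * Real.exp (-(2*Real.pi-2) * t^2 +
            (4*Real.pi*R + 2*Real.pi + 1) * |t| + (2*Real.pi*R + 12))) =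
            24 * Real.pi * (Real.exp |t| * Real.exp (-(2*Real.pi-2) * t^2 +
            (4*Real.pi*R + 2*Real.pi + 1) * |t| + (2*Real.pi*R + 12))) by ring,
            ← Real.exp_add]
          congr 2
          ring
  · -- bound integrable
    rw [hbnd]
    exact (integrable_aux (2*Real.pi-2) (4*Real.pi*R + 2*Real.pi + 2) (2*Real.pi*R + 12)
      hπ).const_mul (24 * Real.pi)
  · -- differentiability
    filter_upwards with t z _
    unfold Fi
    have hd : HasDerivAt (fun z : ℂ => Complex.exp (-2 * Real.pi * I * (1 + (1 + I) * t) * z +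
        Real.pi * I * (1 + (1 + I) * t) ^ 2))
        (Complex.exp (-2 * Real.pi * I * (1 + (1 + I) * t) * z +
          Real.pi * I * (1 + (1 + I) * t) ^ 2) * (-2 * Real.pi * I * (1 + (1 + I) * t))) z := by
      have h0 : HasDerivAt (fun z : ℂ => -2 * Real.pi * I * (1 + (1 + I) * t) * z +
          Real.pi * I * (1 + (1 + I) * t) ^ 2) (-2 * Real.pi * I * (1 + (1 + I) * t)) z := by
        simpa using (((hasDerivAt_id z).const_mul
          (-2 * (Real.pi:ℂ) * I * (1 + (1 + I) * t))).add_const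
          (Real.pi * I * (1 + (1 + I) * t) ^ 2))
      exact h0.cexp
    have := (hd.mul_const (Complex.Gamma (1 + (1 + I) * t))).mul_const (1 + I)
    convert this using 1
    · rfl
    ring
end
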